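/- arXiv:1201.6461 — 4 statements merged into one kernel-verified Lean document; each statement's English description precedes it below -/
import Mathlib

section
/- Let q, q' : ℕ×ℕ → ℝ both be solutions of the Dirichlet problem that are symmetric, i.e., q(i,j) = q(j,i) and q'(i,j) = q'(j,i) for all i,j ∈ ℕ. If q(i,1) = q'(i,1) for all i ≥ 1, then q(i,j) = q'(i,j) for all i,j ∈ ℕ; i.e., a symmetric solution of the Dirichlet problem is completely determined by its values on the row j = 1. -/
/-- a symmetric solution of the Dirichlet problem is completely determined
by its values on the row `j = 1`. -/
theorem dirichlet_determined_by_first_row (r d : ℝ) (hr : 0 < r) (hd : 0 < d)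
    (q q' : ℕ × ℕ → ℝ)
    (hq_bdry1 : ∀ i : ℕ, q (i, 0) = 1) (hq_bdry2 : ∀ j : ℕ, q (0, j) = 1)
    (hq_rec : ∀ i j : ℕ, 1 ≤ i → 1 ≤ j →
      q (i, j)
        = d * i / ((r + d) * ((i : ℝ) + (j : ℝ))) * q (i - 1, j)
          + d * j / ((r + d) * ((i : ℝ) + (j : ℝ))) * q (i, j - 1)
          + r / (2 * (r + d)) * q (i, j + 1)
          + r / (2 * (r + d)) * q (i + 1, j))
    (hq_sym : ∀ i j : ℕ, q (i, j) = q (j, i))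
    (hq'_bdry1 : ∀ i : ℕ, q' (i, 0) = 1) (hq'_bdry2 : ∀ j : ℕ, q' (0, j) = 1)
    (hq'_rec : ∀ i j : ℕ, 1 ≤ i → 1 ≤ j →
      q' (i, j)
        = d * i / ((r + d) * ((i : ℝ) + (j : ℝ))) * q' (i - 1, j)
          + d * j / ((r + d) * ((i : ℝ) + (j : ℝ))) * q' (i, j - 1)
          + r / (2 * (r + d)) * q' (i, j + 1)
          + r / (2 * (r + d)) * q' (i + 1, j))
    (hq'_sym : ∀ i j : ℕ, q' (i, j) = q' (j, i))
    (hrow : ∀ i : ℕ, 1 ≤ i → q (i, 1) = q' (i, 1)) :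
    ∀ i j : ℕ, q (i, j) = q' (i, j) := by
  have hc : r / (2 * (r + d)) ≠ 0 := by positivity
  have main : ∀ s : ℕ, ∀ i j : ℕ, i + j ≤ s → q (i, j) = q' (i, j) := by
    intro s
    induction s with
    | zero =>
      intro i j hij
      have hi : i = 0 := by omega
      have hj : j = 0 := by omega
      subst hi; subst hj
      rw [hq_bdry1 0, hq'_bdry1 0]
    | succ s H =>
      intro i j hij
      rcases Nat.lt_or_ge (i + j) (s + 1) with h | h
      · exact H i j (by omega)
      have hsum : i + j = s + 1 := by omega
      rcases Nat.eq_zero_or_pos i with hi | hi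
      · subst hi; rw [hq_bdry2, hq'_bdry2]
      rcases Nat.eq_zero_or_pos j with hj | hj
      · subst hj; rw [hq_bdry1, hq'_bdry1]
      -- inner induction along the antidiagonal i + j = s + 1
      have inner : ∀ a b : ℕ, a + b = s + 1 → 1 ≤ a → 1 ≤ b →
          q (a, b) = q' (a, b) := by
        intro a
        induction a with
        | zero => intro b _ ha _; omega
        | succ a ih =>
          intro b hab ha hb
          rcases Nat.eq_zero_or_pos a with ha0 | ha0
          · subst ha0
            have hbs : b = s := by omega
            subst hbs
            rw [hq_sym, hq'_sym]
            exact hrow b (by omega)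
          · have e1 := hq_rec a b ha0 hb
            have e2 := hq'_rec a b ha0 hb
            have h0 : q (a, b) = q' (a, b) := H a b (by omega)
            have h1 : q (a - 1, b) = q' (a - 1, b) := H _ _ (by omega)
            have h2 : q (a, b - 1) = q' (a, b - 1) := H _ _ (by omega)
            have h3 : q (a, b + 1) = q' (a, b + 1) := ih (b + 1) (by omega) ha0 (by omega)
            rw [h0, h1, h2, h3] at e1
            have hcq : r / (2 * (r + d)) * q (a + 1, b)
                = r / (2 * (r + d)) * q' (a + 1, b) := by linarith
            exact mul_left_cancel₀ hc hcq
      exact inner i j hsum hi hj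
  intro i j
  exact main (i + j) i j le_rfl
end

section
/- If r ≤ d, then extinction is almost sure from every initial state: p_{i,j} = 1 for all i,j ∈ ℕ. -/
/-- `hitProbAux r d T (i, j) = ℙ_{i,j}[τ₀ ≤ T]`: the probability, for the discrete-time
Markov chain on `ℕ × ℕ` (jumping from a non-absorbed state `(i,j)` to `(i+1,j)` and `(i,j+1)`
with probability `r/(2(r+d))` each, and to `(i-1,j)`, `(i,j-1)` with probabilities
`d·i/((r+d)(i+j))` and `d·j/((r+d)(i+j))`, states with a zero coordinate being absorbing),
started at `(i,j)`, that one of the axes is reached within `T` steps. -/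
noncomputable def hitProbAux (r d : ℝ) : ℕ → ℕ × ℕ → ℝ
  | 0, p => if p.1 = 0 ∨ p.2 = 0 then 1 else 0
  | T + 1, p =>
      if p.1 = 0 ∨ p.2 = 0 then 1
      else
        r / (2 * (r + d)) * hitProbAux r d T (p.1 + 1, p.2)
          + r / (2 * (r + d)) * hitProbAux r d T (p.1, p.2 + 1)
          + d * p.1 / ((r + d) * ((p.1 : ℝ) + (p.2 : ℝ))) * hitProbAux r d T (p.1 - 1, p.2)
          + d * p.2 / ((r + d) * ((p.1 : ℝ) + (p.2 : ℝ))) * hitProbAux r d T (p.1, p.2 - 1)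

/-- `extinctionProb r d i j = p_{i,j} = ℙ_{i,j}[τ₀ < ∞]`, where
`τ₀ = inf {t : X_t = 0 or Y_t = 0}`: it is the supremum (monotone limit) over the time
horizon `T` of `ℙ_{i,j}[τ₀ ≤ T] = hitProbAux r d T (i, j)`. -/
noncomputable def extinctionProb (r d : ℝ) (i j : ℕ) : ℝ :=
  ⨆ T : ℕ, hitProbAux r d T (i, j)

noncomputable def walkProb (p : ℝ) : ℕ → ℕ → ℝ
  | 0, n => if n ≤ 1 then 1 else 0
  | T + 1, n =>
      if n ≤ 1 then 1 else p * walkProb p T (n + 1) + (1 - p) * walkProb p T (n - 1)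

lemma walkProb_absorb (p : ℝ) (T n : ℕ) (hn : n ≤ 1) : walkProb p T n = 1 := by
  cases T <;> simp [walkProb, hn]

lemma walkProb_zero (p : ℝ) (n : ℕ) (hn : ¬ n ≤ 1) : walkProb p 0 n = 0 := by
  simp [walkProb, hn]

lemma walkProb_succ (p : ℝ) (T n : ℕ) (hn : ¬ n ≤ 1) :
    walkProb p (T + 1) n = p * walkProb p T (n + 1) + (1 - p) * walkProb p T (n - 1) := by
  simp [walkProb, hn]

lemma walk_nonneg {p : ℝ} (h0 : 0 ≤ p) (h1 : p ≤ 1) : ∀ T n, 0 ≤ walkProb p T n := by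
  intro T
  induction T with
  | zero =>
    intro n
    by_cases hn : n ≤ 1
    · rw [walkProb_absorb p _ _ hn]; norm_num
    · rw [walkProb_zero p _ hn]
  | succ T ih =>
    intro n
    by_cases hn : n ≤ 1
    · rw [walkProb_absorb p _ _ hn]; norm_num
    · rw [walkProb_succ p _ _ hn]
      exact add_nonneg (mul_nonneg h0 (ih _)) (mul_nonneg (by linarith) (ih _))

lemma walk_le_one {p : ℝ} (h0 : 0 ≤ p) (h1 : p ≤ 1) : ∀ T n, walkProb p T n ≤ 1 := by
  intro T
  induction T with
  | zero =>
    intro n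
    by_cases hn : n ≤ 1
    · rw [walkProb_absorb p _ _ hn]
    · rw [walkProb_zero p _ hn]; norm_num
  | succ T ih =>
    intro n
    by_cases hn : n ≤ 1
    · rw [walkProb_absorb p _ _ hn]
    · rw [walkProb_succ p _ _ hn]
      nlinarith [ih (n+1), ih (n-1)]

lemma walk_anti {p : ℝ} (h0 : 0 ≤ p) (h1 : p ≤ 1) :
    ∀ T n, walkProb p T (n + 1) ≤ walkProb p T n := by
  intro T
  induction T with
  | zero =>
    intro n
    by_cases hn : n ≤ 1
    · rw [walkProb_absorb p _ _ hn]; exact walk_le_one h0 h1 _ _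
    · have hn1 : ¬ (n + 1 ≤ 1) := by omega
      rw [walkProb_zero p _ hn, walkProb_zero p _ hn1]
  | succ T ih =>
    intro n
    by_cases hn : n ≤ 1
    · rw [walkProb_absorb p _ _ hn]; exact walk_le_one h0 h1 _ _
    · have hn1 : ¬ (n + 1 ≤ 1) := by omega
      rw [walkProb_succ p _ _ hn, walkProb_succ p _ _ hn1]
      have e1 : n + 1 - 1 = (n - 1) + 1 := by omega
      have h3 : walkProb p T (n + 1 + 1) ≤ walkProb p T (n + 1) := ih (n+1)
      have h4 : walkProb p T (n + 1 - 1) ≤ walkProb p T (n - 1) := by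
        rw [e1]; exact ih (n-1)
      nlinarith

lemma walk_mono_T {p : ℝ} (h0 : 0 ≤ p) (h1 : p ≤ 1) (n : ℕ) :
    Monotone (fun T => walkProb p T n) := by
  apply monotone_nat_of_le_succ
  intro T
  induction T generalizing n with
  | zero =>
    by_cases hn : n ≤ 1
    · rw [walkProb_absorb p _ _ hn, walkProb_absorb p _ _ hn]
    · rw [walkProb_zero p _ hn]
      exact walk_nonneg h0 h1 _ _
  | succ T ih =>
    by_cases hn : n ≤ 1
    · rw [walkProb_absorb p _ _ hn, walkProb_absorb p _ _ hn]
    · rw [walkProb_succ p _ _ hn, walkProb_succ p _ _ hn]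
      nlinarith [ih (n+1), ih (n-1)]

open Filter Topology

lemma walk_sup_eq_one {p : ℝ} (hp : 0 < p) (hp2 : p ≤ 1 / 2) (n : ℕ) :
    (⨆ T : ℕ, walkProb p T n) = 1 := by
  have h0 : 0 ≤ p := hp.le
  have h1 : p ≤ 1 := by linarith
  set S : ℕ → ℝ := fun m => ⨆ T : ℕ, walkProb p T m with hSdef
  have hbdd : ∀ m, BddAbove (Set.range fun T => walkProb p T m) := by
    intro m
    exact ⟨1, by rintro x ⟨T, rfl⟩; exact walk_le_one h0 h1 T m⟩
  have htend : ∀ m, Tendsto (fun T => walkProb p T m) atTop (𝓝 (S m)) := fun m =>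
    tendsto_atTop_ciSup (walk_mono_T h0 h1 m) (hbdd m)
  have hS1 : ∀ m, m ≤ 1 → S m = 1 := by
    intro m hm
    have : (fun T => walkProb p T m) = fun _ => (1 : ℝ) := by
      funext T; exact walkProb_absorb p T m hm
    simp only [hSdef, this]
    exact ciSup_const
  have hSle : ∀ m, S m ≤ 1 := fun m => ciSup_le (fun T => walk_le_one h0 h1 T m)
  have hSnn : ∀ m, 0 ≤ S m := fun m =>
    le_trans (walk_nonneg h0 h1 0 m) (le_ciSup (hbdd m) 0)
  have hSanti : ∀ m, S (m + 1) ≤ S m := fun m =>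
    ciSup_mono (hbdd m) (fun T => walk_anti h0 h1 T m)
  have hSeq : ∀ m, S (m + 2) = p * S (m + 3) + (1 - p) * S (m + 1) := by
    intro m
    have t1 : Tendsto (fun T => walkProb p (T + 1) (m + 2)) atTop (𝓝 (S (m + 2))) :=
      (htend (m + 2)).comp (tendsto_add_atTop_nat 1)
    have t2 : Tendsto (fun T => p * walkProb p T (m + 3) + (1 - p) * walkProb p T (m + 1))
        atTop (𝓝 (p * S (m + 3) + (1 - p) * S (m + 1))) :=
      ((htend (m + 3)).const_mul p).add ((htend (m + 1)).const_mul (1 - p))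
    have heq : (fun T => walkProb p (T + 1) (m + 2))
        = fun T => p * walkProb p T (m + 3) + (1 - p) * walkProb p T (m + 1) := by
      funext T
      rw [walkProb_succ p T (m + 2) (by omega)]
      have e1 : m + 2 + 1 = m + 3 := by omega
      have e2 : m + 2 - 1 = m + 1 := by omega
      rw [e1, e2]
    rw [heq] at t1
    exact tendsto_nhds_unique t1 t2
  set D : ℕ → ℝ := fun m => S (m + 1) - S (m + 2) with hDdef
  have hDnn : ∀ m, 0 ≤ D m := fun m => by simp only [hDdef]; linarith [hSanti (m + 1)]
  have hDrec : ∀ m, p * D (m + 1) = (1 - p) * D m := by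
    intro m
    have := hSeq m
    simp only [hDdef]
    have e : m + 1 + 2 = m + 3 := by omega
    have e2 : m + 1 + 1 = m + 2 := by omega
    rw [e, e2]
    linear_combination hSeq m
  have hDge : ∀ m, D 0 ≤ D m := by
    intro m
    induction m with
    | zero => exact le_rfl
    | succ m ih =>
      have h := hDrec m
      have h2 : p * D m ≤ p * D (m + 1) := by
        rw [h]
        exact mul_le_mul_of_nonneg_right (by linarith) (hDnn m)
      have h3 : D m ≤ D (m + 1) := le_of_mul_le_mul_left h2 hp
      linarith
  have htel : ∀ m : ℕ, ((m : ℝ) + 1) * D 0 ≤ S 1 - S (m + 2) := by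
    intro m
    induction m with
    | zero => simp only [hDdef]; norm_num
    | succ m ih =>
      have h := hDge (m + 1)
      have e : D (m + 1) = S (m + 2) - S (m + 3) := rfl
      have e3 : m + 1 + 2 = m + 3 := by omega
      rw [e3]
      push_cast
      have e4 : ((m : ℝ) + 1 + 1) * D 0 = ((m : ℝ) + 1) * D 0 + D 0 := by ring
      linarith
  have hD0z : D 0 = 0 := by
    refine le_antisymm ?_ (hDnn 0)
    by_contra hpos
    push_neg at hpos
    obtain ⟨m, hm⟩ := exists_nat_gt (1 / D 0)
    have h2 : 1 < (m : ℝ) * D 0 := (div_lt_iff₀ hpos).mp hm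
    have h3 := htel m
    have h4 := hSle 1
    have h5 := hSnn (m + 2)
    nlinarith [hDnn 0]
  have hDeq : ∀ m, D m = 0 := by
    intro m
    induction m with
    | zero => exact hD0z
    | succ m ih =>
      have := hDrec m
      rw [ih, mul_zero] at this
      have := mul_eq_zero.mp this
      rcases this with h | h
      · exact absurd h hp.ne'
      · exact h
  have hSone : ∀ m, S (m + 1) = 1 := by
    intro m
    induction m with
    | zero => exact hS1 1 le_rfl
    | succ m ih =>
      have := hDeq m
      simp only [hDdef] at this
      have e : m + 2 = m + 1 + 1 := rfl
      linarith
  show S n = 1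
  cases n with
  | zero => exact hS1 0 (by norm_num)
  | succ n => exact hSone n

lemma hitProbAux_absorb (r d : ℝ) (T : ℕ) (i j : ℕ) (h : i = 0 ∨ j = 0) :
    hitProbAux r d T (i, j) = 1 := by
  cases T <;> simp [hitProbAux, h]

lemma hitProbAux_zero (r d : ℝ) (i j : ℕ) (h : ¬ (i = 0 ∨ j = 0)) :
    hitProbAux r d 0 (i, j) = 0 := by
  simp only [hitProbAux, if_neg h]

lemma hitProbAux_succ (r d : ℝ) (T : ℕ) (i j : ℕ) (h : ¬ (i = 0 ∨ j = 0)) :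
    hitProbAux r d (T + 1) (i, j) =
      r / (2 * (r + d)) * hitProbAux r d T (i + 1, j)
        + r / (2 * (r + d)) * hitProbAux r d T (i, j + 1)
        + d * i / ((r + d) * ((i : ℝ) + (j : ℝ))) * hitProbAux r d T (i - 1, j)
        + d * j / ((r + d) * ((i : ℝ) + (j : ℝ))) * hitProbAux r d T (i, j - 1) := by
  conv_lhs => rw [hitProbAux]
  rw [if_neg h]

lemma hit_le_one {r d : ℝ} (hr : 0 < r) (hd : 0 < d) :
    ∀ T (i j : ℕ), hitProbAux r d T (i, j) ≤ 1 ∧ 0 ≤ hitProbAux r d T (i, j) := by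
  intro T
  induction T with
  | zero =>
    intro i j
    by_cases h : i = 0 ∨ j = 0
    · rw [hitProbAux_absorb r d _ _ _ h]; norm_num
    · rw [hitProbAux_zero r d _ _ h]; norm_num
  | succ T ih =>
    intro i j
    by_cases h : i = 0 ∨ j = 0
    · rw [hitProbAux_absorb r d _ _ _ h]; norm_num
    · push_neg at h
      obtain ⟨hi, hj⟩ := h
      have hi1 : 1 ≤ i := Nat.one_le_iff_ne_zero.mpr hi
      have hj1 : 1 ≤ j := Nat.one_le_iff_ne_zero.mpr hj
      rw [hitProbAux_succ r d T i j (by push_neg; exact ⟨hi, hj⟩)]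
      have hrd : 0 < r + d := by linarith
      have hij : (0 : ℝ) < (i : ℝ) + (j : ℝ) := by
        have : (1 : ℝ) ≤ (i : ℝ) := by exact_mod_cast hi1
        have : (0 : ℝ) ≤ (j : ℝ) := Nat.cast_nonneg j
        linarith
      have hc1 : 0 < r / (2 * (r + d)) := by positivity
      have hci : 0 ≤ d * (i : ℝ) / ((r + d) * ((i : ℝ) + (j : ℝ))) := by positivity
      have hcj : 0 ≤ d * (j : ℝ) / ((r + d) * ((i : ℝ) + (j : ℝ))) := by positivity
      have hsum : r / (2 * (r + d)) + r / (2 * (r + d))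
          + d * (i : ℝ) / ((r + d) * ((i : ℝ) + (j : ℝ)))
          + d * (j : ℝ) / ((r + d) * ((i : ℝ) + (j : ℝ))) = 1 := by
        field_simp
        ring
      obtain ⟨hA1, hA0⟩ := ih (i + 1) j
      obtain ⟨hB1, hB0⟩ := ih i (j + 1)
      obtain ⟨hC1, hC0⟩ := ih (i - 1) j
      obtain ⟨hD1, hD0⟩ := ih i (j - 1)
      constructor
      · nlinarith [hc1.le, hci, hcj]
      · positivity

lemma walk_le_hit {r d : ℝ} (hr : 0 < r) (hd : 0 < d) :
    ∀ T (i j : ℕ), walkProb (r / (r + d)) T (i + j) ≤ hitProbAux r d T (i, j) := by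
  have hrd : 0 < r + d := by linarith
  have hp0 : 0 ≤ r / (r + d) := by positivity
  have hp1 : r / (r + d) ≤ 1 := by
    rw [div_le_one hrd]; linarith
  intro T
  induction T with
  | zero =>
    intro i j
    by_cases h : i = 0 ∨ j = 0
    · rw [hitProbAux_absorb r d _ _ _ h]
      exact walk_le_one hp0 hp1 _ _
    · push_neg at h
      have hn : ¬ (i + j ≤ 1) := by omega
      rw [hitProbAux_zero r d _ _ (by push_neg; exact h), walkProb_zero _ _ hn]
  | succ T ih =>
    intro i j
    by_cases h : i = 0 ∨ j = 0
    · rw [hitProbAux_absorb r d _ _ _ h]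
      exact walk_le_one hp0 hp1 _ _
    · push_neg at h
      obtain ⟨hi, hj⟩ := h
      have hi1 : 1 ≤ i := Nat.one_le_iff_ne_zero.mpr hi
      have hj1 : 1 ≤ j := Nat.one_le_iff_ne_zero.mpr hj
      have hn : ¬ (i + j ≤ 1) := by omega
      rw [walkProb_succ _ _ _ hn, hitProbAux_succ r d T i j (by push_neg; exact ⟨hi, hj⟩)]
      have hij : (0 : ℝ) < (i : ℝ) + (j : ℝ) := by
        have h1 : (1 : ℝ) ≤ (i : ℝ) := by exact_mod_cast hi1
        have h2 : (0 : ℝ) ≤ (j : ℝ) := Nat.cast_nonneg j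
        linarith
      have hc1 : 0 ≤ r / (2 * (r + d)) := by positivity
      have hci : 0 ≤ d * (i : ℝ) / ((r + d) * ((i : ℝ) + (j : ℝ))) := by positivity
      have hcj : 0 ≤ d * (j : ℝ) / ((r + d) * ((i : ℝ) + (j : ℝ))) := by positivity
      -- index identities
      have eA : (i + 1) + j = (i + j) + 1 := by omega
      have eB : i + (j + 1) = (i + j) + 1 := by omega
      have eC : (i - 1) + j = (i + j) - 1 := by omega
      have eD : i + (j - 1) = (i + j) - 1 := by omega
      have hA := ih (i + 1) j
      have hB := ih i (j + 1)
      have hC := ih (i - 1) j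
      have hD := ih i (j - 1)
      rw [eA] at hA; rw [eB] at hB; rw [eC] at hC; rw [eD] at hD
      -- coefficient identities
      have hsplit : r / (2 * (r + d)) + r / (2 * (r + d)) = r / (r + d) := by
        field_simp; ring
      have hdown : d * (i : ℝ) / ((r + d) * ((i : ℝ) + (j : ℝ)))
          + d * (j : ℝ) / ((r + d) * ((i : ℝ) + (j : ℝ))) = 1 - r / (r + d) := by
        field_simp
        ring
      set w1 := walkProb (r / (r + d)) T (i + j + 1) with hw1
      set w2 := walkProb (r / (r + d)) T (i + j - 1) with hw2
      have lhs_eq : r / (r + d) * w1 + (1 - r / (r + d)) * w2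
          = r / (2 * (r + d)) * w1 + r / (2 * (r + d)) * w1
            + d * (i : ℝ) / ((r + d) * ((i : ℝ) + (j : ℝ))) * w2
            + d * (j : ℝ) / ((r + d) * ((i : ℝ) + (j : ℝ))) * w2 := by
        linear_combination (-w1) * hsplit + (-w2) * hdown
      rw [lhs_eq]
      gcongr

/-- if `r ≤ d`, extinction is almost sure from every initial state. -/
theorem extinctionProb_eq_one_of_le (r d : ℝ) (hr : 0 < r) (hd : 0 < d) (hrd : r ≤ d) :
    ∀ i j : ℕ, extinctionProb r d i j = 1 := by
  intro i j
  have hrd0 : 0 < r + d := by linarith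
  have hp : 0 < r / (r + d) := by positivity
  have hp2 : r / (r + d) ≤ 1 / 2 := by
    rw [div_le_div_iff₀ hrd0 (by norm_num : (0:ℝ) < 2)]
    linarith
  have hbddH : BddAbove (Set.range fun T => hitProbAux r d T (i, j)) :=
    ⟨1, by rintro x ⟨T, rfl⟩; exact (hit_le_one hr hd T i j).1⟩
  unfold extinctionProb
  apply le_antisymm
  · exact ciSup_le fun T => (hit_le_one hr hd T i j).1
  · calc (1 : ℝ) = ⨆ T : ℕ, walkProb (r / (r + d)) T (i + j) :=
        (walk_sup_eq_one hp hp2 (i + j)).symm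
      _ ≤ ⨆ T : ℕ, hitProbAux r d T (i, j) :=
        ciSup_mono hbddH (fun T => walk_le_hit hr hd T i j)
end

section
/- If r > d, then for all i,j ∈ ℕ the extinction probability satisfies the lower bound (d/r)^{i+j} ≤ p_{i,j}. -/
lemma hitProbAux_nonneg (r d : ℝ) (hd : 0 < d) (hr : 0 < r) :
    ∀ T p, 0 ≤ hitProbAux r d T p := by
  intro T
  induction T with
  | zero => intro p; simp only [hitProbAux]; split_ifs <;> norm_num
  | succ T ih =>
      intro p
      simp only [hitProbAux]
      split_ifs with h
      · norm_num
      · have h1 := ih (p.1 + 1, p.2)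
        have h2 := ih (p.1, p.2 + 1)
        have h3 := ih (p.1 - 1, p.2)
        have h4 := ih (p.1, p.2 - 1)
        have hrd : (0:ℝ) < r + d := by linarith
        have c1 : (0:ℝ) ≤ r / (2 * (r + d)) := by positivity
        have c3 : (0:ℝ) ≤ d * p.1 / ((r + d) * ((p.1 : ℝ) + (p.2 : ℝ))) := by positivity
        have c4 : (0:ℝ) ≤ d * p.2 / ((r + d) * ((p.1 : ℝ) + (p.2 : ℝ))) := by positivity
        have := mul_nonneg c1 h1
        have := mul_nonneg c1 h2
        have := mul_nonneg c3 h3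
        have := mul_nonneg c4 h4
        linarith

lemma hitProbAux_le_one (r d : ℝ) (hd : 0 < d) (hr : 0 < r) :
    ∀ T p, hitProbAux r d T p ≤ 1 := by
  intro T
  induction T with
  | zero => intro p; simp only [hitProbAux]; split_ifs <;> norm_num
  | succ T ih =>
      intro p
      simp only [hitProbAux]
      split_ifs with h
      · exact le_refl 1
      · push_neg at h
        obtain ⟨hi, hj⟩ := h
        have h1 := ih (p.1 + 1, p.2)
        have h2 := ih (p.1, p.2 + 1)
        have h3 := ih (p.1 - 1, p.2)
        have h4 := ih (p.1, p.2 - 1)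
        have hrd : (0:ℝ) < r + d := by linarith
        have hij : (0:ℝ) < (p.1 : ℝ) + (p.2 : ℝ) := by
          have : (0:ℝ) < (p.1 : ℝ) := by exact_mod_cast Nat.pos_of_ne_zero hi
          have : (0:ℝ) ≤ (p.2 : ℝ) := Nat.cast_nonneg _
          linarith
        have c1 : (0:ℝ) ≤ r / (2 * (r + d)) := by positivity
        have c3 : (0:ℝ) ≤ d * p.1 / ((r + d) * ((p.1 : ℝ) + (p.2 : ℝ))) := by positivity
        have c4 : (0:ℝ) ≤ d * p.2 / ((r + d) * ((p.1 : ℝ) + (p.2 : ℝ))) := by positivity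
        have hsum : r / (2 * (r + d)) + r / (2 * (r + d))
            + d * p.1 / ((r + d) * ((p.1 : ℝ) + (p.2 : ℝ)))
            + d * p.2 / ((r + d) * ((p.1 : ℝ) + (p.2 : ℝ))) = 1 := by
          field_simp
          ring
        nlinarith [mul_le_mul_of_nonneg_left h1 c1, mul_le_mul_of_nonneg_left h2 c1,
          mul_le_mul_of_nonneg_left h3 c3, mul_le_mul_of_nonneg_left h4 c4]

lemma hitProbAux_key (r d l ρ : ℝ) (hd : 0 < d) (hrd : d < r)
    (hl0 : 0 < l) (hql : d / r ≤ l) (hρ0 : 0 ≤ ρ)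
    (hid : r / (r + d) * l ^ 2 + d / (r + d) = ρ * l) :
    ∀ T i j : ℕ, (d / r) ^ (i + j) - ρ ^ T * l ^ (i + j) ≤ hitProbAux r d T (i, j) := by
  have hr : (0:ℝ) < r := lt_trans hd hrd
  have hq0 : (0:ℝ) ≤ d / r := by positivity
  have hq1 : d / r ≤ 1 := by
    rw [div_le_one hr]; linarith
  intro T
  induction T with
  | zero =>
      intro i j
      simp only [hitProbAux, pow_zero, one_mul]
      split_ifs with h
      · have h1 : (d / r) ^ (i + j) ≤ 1 := pow_le_one₀ hq0 hq1
        have h2 : (0:ℝ) ≤ l ^ (i + j) := by positivity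
        linarith
      · have := pow_le_pow_left₀ hq0 hql (i + j)
        linarith
  | succ T ih =>
      intro i j
      simp only [hitProbAux]
      split_ifs with h
      · have h1 : (d / r) ^ (i + j) ≤ 1 := pow_le_one₀ hq0 hq1
        have h2 : (0:ℝ) ≤ ρ ^ (T + 1) * l ^ (i + j) := by positivity
        linarith
      · push_neg at h
        obtain ⟨hi, hj⟩ := h
        obtain ⟨i', rfl⟩ := Nat.exists_eq_succ_of_ne_zero hi
        obtain ⟨j', rfl⟩ := Nat.exists_eq_succ_of_ne_zero hj
        set i := i' + 1
        set j := j' + 1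
        have hrd0 : (0:ℝ) < r + d := by linarith
        have hij : (0:ℝ) < (i : ℝ) + (j : ℝ) := by
          have : (1:ℝ) ≤ (i : ℝ) := by exact_mod_cast Nat.one_le_iff_ne_zero.2 hi
          have : (0:ℝ) ≤ (j : ℝ) := Nat.cast_nonneg _
          linarith
        have c1 : (0:ℝ) ≤ r / (2 * (r + d)) := by positivity
        have c3 : (0:ℝ) ≤ d * i / ((r + d) * ((i : ℝ) + (j : ℝ))) := by positivity
        have c4 : (0:ℝ) ≤ d * j / ((r + d) * ((i : ℝ) + (j : ℝ))) := by positivity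
        have h1 := mul_le_mul_of_nonneg_left (ih (i + 1) j) c1
        have h2 := mul_le_mul_of_nonneg_left (ih i (j + 1)) c1
        have h3 := mul_le_mul_of_nonneg_left (ih (i - 1) j) c3
        have h4 := mul_le_mul_of_nonneg_left (ih i (j - 1)) c4
        have e1 : i + 1 + j = i' + j' + 3 := by omega
        have e2 : i + (j + 1) = i' + j' + 3 := by omega
        have e3 : i - 1 + j = i' + j' + 1 := by omega
        have e4 : i + (j - 1) = i' + j' + 1 := by omega
        rw [e1] at h1; rw [e2] at h2; rw [e3] at h3; rw [e4] at h4
        have hn : i + j = i' + j' + 2 := by omega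
        rw [hn]
        set m := i' + j' with hm
        -- sum of down coefficients
        have hci : (i : ℝ) = (i' : ℝ) + 1 := by show ((i' + 1 : ℕ) : ℝ) = _; push_cast; ring
        have hcj : (j : ℝ) = (j' : ℝ) + 1 := by show ((j' + 1 : ℕ) : ℝ) = _; push_cast; ring
        have hbsum : d * i / ((r + d) * ((i : ℝ) + (j : ℝ)))
            + d * j / ((r + d) * ((i : ℝ) + (j : ℝ))) = d / (r + d) := by
          rw [← add_div, div_eq_div_iff (by positivity) (by positivity)]
          ring
        -- the scalar identity for d/r
        have hidq : r / (r + d) * (d / r) ^ 2 + d / (r + d) = (d / r) := by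
          field_simp
          ring
        -- combination identity
        have hcomb : r / (2 * (r + d)) * ((d / r) ^ (m + 3) - ρ ^ T * l ^ (m + 3))
            + r / (2 * (r + d)) * ((d / r) ^ (m + 3) - ρ ^ T * l ^ (m + 3))
            + d * i / ((r + d) * ((i : ℝ) + (j : ℝ))) * ((d / r) ^ (m + 1) - ρ ^ T * l ^ (m + 1))
            + d * j / ((r + d) * ((i : ℝ) + (j : ℝ))) * ((d / r) ^ (m + 1) - ρ ^ T * l ^ (m + 1))
            = (d / r) ^ (m + 2) - ρ ^ (T + 1) * l ^ (m + 2) := by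
          have expand : r / (2 * (r + d)) * ((d / r) ^ (m + 3) - ρ ^ T * l ^ (m + 3))
              + r / (2 * (r + d)) * ((d / r) ^ (m + 3) - ρ ^ T * l ^ (m + 3))
              + d * i / ((r + d) * ((i : ℝ) + (j : ℝ))) * ((d / r) ^ (m + 1) - ρ ^ T * l ^ (m + 1))
              + d * j / ((r + d) * ((i : ℝ) + (j : ℝ))) * ((d / r) ^ (m + 1) - ρ ^ T * l ^ (m + 1))
              = (d / r) ^ (m + 1) * (r / (r + d) * (d / r) ^ 2 + d / (r + d))
                - ρ ^ T * l ^ (m + 1) * (r / (r + d) * l ^ 2 + d / (r + d)) := by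
            have h2a : r / (2 * (r + d)) + r / (2 * (r + d)) = r / (r + d) := by
              rw [← add_div, div_eq_div_iff (by positivity) (by positivity)]; ring
            linear_combination ((d / r) ^ (m + 3) - ρ ^ T * l ^ (m + 3)) * h2a
              + ((d / r) ^ (m + 1) - ρ ^ T * l ^ (m + 1)) * hbsum
          rw [expand, hidq, hid]
          ring
        linarith

/-- if `r > d`, the lower bound `(d/r)^(i+j) ≤ p_{i,j}` holds. -/
theorem extinctionProb_lower_bound (r d : ℝ) (hd : 0 < d) (hrd : d < r) :
    ∀ i j : ℕ, (d / r) ^ (i + j) ≤ extinctionProb r d i j := by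
  have hr : (0:ℝ) < r := lt_trans hd hrd
  have hrd0 : (0:ℝ) < r + d := by linarith
  set l : ℝ := (d / r + 1) / 2 with hl
  have hq0 : (0:ℝ) < d / r := by positivity
  have hq1 : d / r < 1 := by rw [div_lt_one hr]; exact hrd
  have hl0 : (0:ℝ) < l := by rw [hl]; linarith
  have hql : d / r ≤ l := by rw [hl]; linarith
  have hl1 : l < 1 := by rw [hl]; linarith
  set ρ : ℝ := (r * l ^ 2 + d) / ((r + d) * l) with hρ
  have hρ0 : (0:ℝ) ≤ ρ := by rw [hρ]; positivity
  have hid : r / (r + d) * l ^ 2 + d / (r + d) = ρ * l := by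
    rw [hρ]; field_simp
  have hρ1 : ρ < 1 := by
    rw [hρ, div_lt_one (by positivity)]
    have : r * l ^ 2 + d - (r + d) * l = (r * l - d) * (l - 1) := by ring
    nlinarith [mul_le_mul_of_nonneg_left hql (le_of_lt hr), div_mul_cancel₀ d (ne_of_gt hr)]
  intro i j
  have key := hitProbAux_key r d l ρ hd hrd hl0 hql hρ0 hid
  have hbdd : BddAbove (Set.range fun T => hitProbAux r d T (i, j)) := by
    refine ⟨1, ?_⟩
    rintro x ⟨T, rfl⟩
    exact hitProbAux_le_one r d hd hr T (i, j)
  have hle : ∀ T : ℕ, (d / r) ^ (i + j) - ρ ^ T * l ^ (i + j) ≤ extinctionProb r d i j := by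
    intro T
    exact le_trans (key T i j) (le_ciSup hbdd T)
  have htend : Filter.Tendsto (fun T : ℕ => (d / r) ^ (i + j) - ρ ^ T * l ^ (i + j))
      Filter.atTop (nhds ((d / r) ^ (i + j))) := by
    have h0 : Filter.Tendsto (fun T : ℕ => ρ ^ T) Filter.atTop (nhds 0) :=
      tendsto_pow_atTop_nhds_zero_of_lt_one hρ0 hρ1
    have := (h0.mul_const (l ^ (i + j))).const_sub ((d / r) ^ (i + j))
    simpa using this
  exact le_of_tendsto htend (Filter.Eventually.of_forall hle)
end

section
/- If r > d, then for all i,j ∈ ℕ the extinction probability satisfies the upper bound p_{i,j} ≤ (d/r)^i + (d/r)^j − (d/r)^{i+j}; in particular, for all i,j ≥ 1 one has p_{i,j} < 1, i.e., the survival probability is strictly positive. -/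
/-- The supermartingale (one-step) inequality for `F(i,j) = q^i + q^j - q^(i+j)`, `q = d/r`. -/
lemma super_step (r d : ℝ) (hd : 0 < d) (hrd : d < r) (i' j' : ℕ) :
    r / (2 * (r + d)) * ((d/r) ^ (i'+1+1) + (d/r) ^ (j'+1) - (d/r) ^ (i'+1+1+(j'+1)))
      + r / (2 * (r + d)) * ((d/r) ^ (i'+1) + (d/r) ^ (j'+1+1) - (d/r) ^ (i'+1+(j'+1+1)))
      + d * ((i':ℝ)+1) / ((r + d) * (((i':ℝ)+1) + ((j':ℝ)+1)))
          * ((d/r) ^ i' + (d/r) ^ (j'+1) - (d/r) ^ (i'+(j'+1)))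
      + d * ((j':ℝ)+1) / ((r + d) * (((i':ℝ)+1) + ((j':ℝ)+1)))
          * ((d/r) ^ (i'+1) + (d/r) ^ j' - (d/r) ^ (i'+1+j'))
    ≤ (d/r) ^ (i'+1) + (d/r) ^ (j'+1) - (d/r) ^ (i'+1+(j'+1)) := by
  have hr : 0 < r := hd.trans hrd
  have hr0 : r ≠ 0 := hr.ne'
  have hrd0 : r + d ≠ 0 := by positivity
  have hN : ((i':ℝ)+1) + ((j':ℝ)+1) ≠ 0 := by positivity
  have hq0 : (0:ℝ) ≤ d / r := by positivity
  have hq1 : d / r < 1 := (div_lt_one hr).2 hrd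
  have hsign : 0 ≤ ((j':ℝ) - (i':ℝ)) * ((d/r) ^ i' - (d/r) ^ j') := by
    rcases le_total i' j' with h | h
    · exact mul_nonneg (sub_nonneg.2 (Nat.cast_le.2 h))
        (sub_nonneg.2 (pow_le_pow_of_le_one hq0 hq1.le h))
    · have : 0 ≤ ((i':ℝ) - (j':ℝ)) * ((d/r) ^ j' - (d/r) ^ i') :=
        mul_nonneg (sub_nonneg.2 (Nat.cast_le.2 h))
          (sub_nonneg.2 (pow_le_pow_of_le_one hq0 hq1.le h))
      nlinarith [this]
  have hiden :
      ((d/r) ^ (i'+1) + (d/r) ^ (j'+1) - (d/r) ^ (i'+1+(j'+1)))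
        - (r / (2 * (r + d)) * ((d/r) ^ (i'+1+1) + (d/r) ^ (j'+1) - (d/r) ^ (i'+1+1+(j'+1)))
          + r / (2 * (r + d)) * ((d/r) ^ (i'+1) + (d/r) ^ (j'+1+1) - (d/r) ^ (i'+1+(j'+1+1)))
          + d * ((i':ℝ)+1) / ((r + d) * (((i':ℝ)+1) + ((j':ℝ)+1)))
              * ((d/r) ^ i' + (d/r) ^ (j'+1) - (d/r) ^ (i'+(j'+1)))
          + d * ((j':ℝ)+1) / ((r + d) * (((i':ℝ)+1) + ((j':ℝ)+1)))
              * ((d/r) ^ (i'+1) + (d/r) ^ j' - (d/r) ^ (i'+1+j')))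
      = (1 - d/r) * (d / (2 * (r + d) * (((i':ℝ)+1) + ((j':ℝ)+1))))
          * (((j':ℝ) - (i':ℝ)) * ((d/r) ^ i' - (d/r) ^ j')) := by
    simp only [pow_add, pow_one]
    field_simp
    ring
  have hc1 : (0:ℝ) ≤ 1 - d/r := by linarith
  have hc2 : (0:ℝ) ≤ d / (2 * (r + d) * (((i':ℝ)+1) + ((j':ℝ)+1))) := by positivity
  nlinarith [mul_nonneg (mul_nonneg hc1 hc2) hsign]


lemma F_nonneg (r d : ℝ) (hd : 0 < d) (hrd : d < r) (i j : ℕ) :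
    0 ≤ (d/r) ^ i + (d/r) ^ j - (d/r) ^ (i+j) := by
  have hr : 0 < r := hd.trans hrd
  have hq0 : (0:ℝ) ≤ d / r := by positivity
  have hq1 : d / r ≤ 1 := by rw [div_le_one hr]; linarith
  have h1 : (d/r) ^ i ≤ 1 := pow_le_one₀ hq0 hq1
  have h2 : (d/r) ^ j ≤ 1 := pow_le_one₀ hq0 hq1
  have h3 : (0:ℝ) ≤ (d/r) ^ i := pow_nonneg hq0 i
  have h4 : (0:ℝ) ≤ (d/r) ^ j := pow_nonneg hq0 j
  rw [pow_add]
  nlinarith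

lemma hit_le (r d : ℝ) (hd : 0 < d) (hrd : d < r) :
    ∀ T (i j : ℕ), hitProbAux r d T (i, j) ≤ (d/r) ^ i + (d/r) ^ j - (d/r) ^ (i+j) := by
  have hr : 0 < r := hd.trans hrd
  intro T
  induction T with
  | zero =>
    intro i j
    by_cases h : i = 0 ∨ j = 0
    · simp only [hitProbAux, h, if_true]
      rcases h with h | h <;> subst h <;> simp
    · simp only [hitProbAux, h, if_false]
      exact F_nonneg r d hd hrd i j
  | succ T ih =>
    intro i j
    by_cases h : i = 0 ∨ j = 0
    · simp only [hitProbAux, h, if_true]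
      rcases h with h | h <;> subst h <;> simp
    · push_neg at h
      obtain ⟨i', rfl⟩ := Nat.exists_eq_succ_of_ne_zero h.1
      obtain ⟨j', rfl⟩ := Nat.exists_eq_succ_of_ne_zero h.2
      have hcond : ¬(i' + 1 = 0 ∨ j' + 1 = 0) := by omega
      simp only [hitProbAux, hcond, if_false, Nat.add_sub_cancel]
      have ha : (0:ℝ) ≤ r / (2 * (r + d)) := by positivity
      have hbx : (0:ℝ) ≤ d * ((i':ℕ)+1 : ℕ) / ((r + d) * (((i'+1:ℕ):ℝ) + ((j'+1:ℕ):ℝ))) := by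
        positivity
      have hby : (0:ℝ) ≤ d * ((j':ℕ)+1 : ℕ) / ((r + d) * (((i'+1:ℕ):ℝ) + ((j'+1:ℕ):ℝ))) := by
        positivity
      calc r / (2 * (r + d)) * hitProbAux r d T (i' + 1 + 1, j' + 1)
            + r / (2 * (r + d)) * hitProbAux r d T (i' + 1, j' + 1 + 1)
            + d * ((i'+1:ℕ):ℝ) / ((r + d) * (((i'+1:ℕ):ℝ) + ((j'+1:ℕ):ℝ)))
                * hitProbAux r d T (i', j' + 1)
            + d * ((j'+1:ℕ):ℝ) / ((r + d) * (((i'+1:ℕ):ℝ) + ((j'+1:ℕ):ℝ)))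
                * hitProbAux r d T (i' + 1, j')
          ≤ r / (2 * (r + d)) * ((d/r) ^ (i'+1+1) + (d/r) ^ (j'+1) - (d/r) ^ (i'+1+1+(j'+1)))
            + r / (2 * (r + d)) * ((d/r) ^ (i'+1) + (d/r) ^ (j'+1+1) - (d/r) ^ (i'+1+(j'+1+1)))
            + d * ((i'+1:ℕ):ℝ) / ((r + d) * (((i'+1:ℕ):ℝ) + ((j'+1:ℕ):ℝ)))
                * ((d/r) ^ i' + (d/r) ^ (j'+1) - (d/r) ^ (i'+(j'+1)))
            + d * ((j'+1:ℕ):ℝ) / ((r + d) * (((i'+1:ℕ):ℝ) + ((j'+1:ℕ):ℝ)))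
                * ((d/r) ^ (i'+1) + (d/r) ^ j' - (d/r) ^ (i'+1+j')) := by
            gcongr <;> exact ih _ _
        _ ≤ (d/r) ^ (i'+1) + (d/r) ^ (j'+1) - (d/r) ^ (i'+1+(j'+1)) := by
            have := super_step r d hd hrd i' j'
            push_cast
            push_cast at this
            convert this using 2

/-- if `r > d`, the upper bound
`p_{i,j} ≤ (d/r)^i + (d/r)^j − (d/r)^(i+j)` holds; in particular `p_{i,j} < 1` for
`i, j ≥ 1`, i.e. the survival probability is strictly positive. -/
theorem extinctionProb_upper_bound (r d : ℝ) (hd : 0 < d) (hrd : d < r) :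
    (∀ i j : ℕ,
      extinctionProb r d i j ≤ (d / r) ^ i + (d / r) ^ j - (d / r) ^ (i + j)) ∧
    (∀ i j : ℕ, 1 ≤ i → 1 ≤ j → extinctionProb r d i j < 1) := by
  have hbound : ∀ i j : ℕ,
      extinctionProb r d i j ≤ (d / r) ^ i + (d / r) ^ j - (d / r) ^ (i + j) :=
    fun i j => ciSup_le fun T => hit_le r d hd hrd T i j
  refine ⟨hbound, fun i j hi hj => ?_⟩
  have hr : 0 < r := hd.trans hrd
  have hq0 : (0:ℝ) ≤ d / r := by positivity
  have hq1 : d / r < 1 := (div_lt_one hr).2 hrd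
  have h1 : (d/r) ^ i < 1 := pow_lt_one₀ hq0 hq1 (by omega)
  have h2 : (d/r) ^ j < 1 := pow_lt_one₀ hq0 hq1 (by omega)
  have hlt : (d / r) ^ i + (d / r) ^ j - (d / r) ^ (i + j) < 1 := by
    rw [pow_add]; nlinarith
  exact lt_of_le_of_lt (hbound i j) hlt
end
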